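/- For fixed H ∈ ℝ and ρ ∈ ℝ, the pointwise limit as m → ∞ of J_{H,ρ,m}(t) = ((c_{ρ/m}(t) + (H/m) s_{ρ/m}(t))₊)^m equals exp(H t − (ρ/2) t²), for every t ∈ ℝ. -/

import Mathlib

open scoped Classical

noncomputable def sdel (δ t : ℝ) : ℝ :=
  if 0 < δ then Real.sin (Real.sqrt δ * t) / Real.sqrt δ
  else if δ = 0 then t
  else Real.sinh (Real.sqrt (-δ) * t) / Real.sqrt (-δ)

noncomputable def cdel (δ t : ℝ) : ℝ :=
  if 0 < δ then Real.cos (Real.sqrt δ * t)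
  else if δ = 0 then 1
  else Real.cosh (Real.sqrt (-δ) * t)

/-- Truncation `f₊` of `f` between its first nonpositive and first positive roots. -/
noncomputable def truncPos (f : ℝ → ℝ) (t : ℝ) : ℝ :=
  if ∃ s ∈ Set.Ioo (min t 0) (max t 0), f s = 0 then 0 else f t

/-- The model Jacobian `J_{H,ρ,m}` for `m ∈ (0,∞)`. -/
noncomputable def Jfun (H ρ m : ℝ) (t : ℝ) : ℝ :=
  (truncPos (fun s => cdel (ρ / m) s + (H / m) * sdel (ρ / m) s) t) ^ m

open Filter Real

lemma aux_sin_div : Tendsto (fun y : ℝ => Real.sin y / y) (nhdsWithin 0 {(0:ℝ)}ᶜ) (nhds 1) := by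
  have h := Real.hasDerivAt_sin 0
  rw [Real.cos_zero] at h
  have h2 := hasDerivAt_iff_tendsto_slope.mp h
  refine h2.congr fun y => ?_
  simp [slope_def_field]

lemma aux_sinh_div : Tendsto (fun y : ℝ => Real.sinh y / y) (nhdsWithin 0 {(0:ℝ)}ᶜ) (nhds 1) := by
  have h := Real.hasDerivAt_sinh 0
  rw [Real.cosh_zero] at h
  have h2 := hasDerivAt_iff_tendsto_slope.mp h
  refine h2.congr fun y => ?_
  simp [slope_def_field]

lemma aux_half : Tendsto (fun y : ℝ => y / 2) (nhdsWithin 0 {(0:ℝ)}ᶜ) (nhdsWithin 0 {(0:ℝ)}ᶜ) := by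
  rw [tendsto_nhdsWithin_iff]
  constructor
  · have h : Tendsto (fun y : ℝ => y / 2) (nhds 0) (nhds (0 / 2)) :=
      (continuous_id.div_const 2).tendsto 0
    simpa using h.mono_left nhdsWithin_le_nhds
  · filter_upwards [self_mem_nhdsWithin] with y hy
    simp only [Set.mem_compl_iff, Set.mem_singleton_iff] at hy ⊢
    exact div_ne_zero hy two_ne_zero

lemma aux_cos : Tendsto (fun y : ℝ => (Real.cos y - 1) / y ^ 2) (nhdsWithin 0 {(0:ℝ)}ᶜ)
    (nhds (-(1/2))) := by
  have h1 : Tendsto (fun y : ℝ => -(1/2) * (Real.sin (y/2) / (y/2)) ^ 2)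
      (nhdsWithin 0 {(0:ℝ)}ᶜ) (nhds (-(1/2))) := by
    have h := ((aux_sin_div.comp aux_half).pow 2).const_mul (-(1/2) : ℝ)
    simpa using h
  refine h1.congr' ?_
  filter_upwards [self_mem_nhdsWithin] with y hy
  have hy' : y ≠ 0 := hy
  have hcos : Real.cos y = 1 - 2 * Real.sin (y/2) ^ 2 := by
    have h1 := Real.cos_two_mul (y/2)
    have h2 := Real.sin_sq_add_cos_sq (y/2)
    rw [show 2 * (y/2) = y by ring] at h1
    linarith
  rw [hcos]
  field_simp
  ring

lemma aux_cosh : Tendsto (fun y : ℝ => (Real.cosh y - 1) / y ^ 2) (nhdsWithin 0 {(0:ℝ)}ᶜ)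
    (nhds (1/2)) := by
  have h1 : Tendsto (fun y : ℝ => (1/2) * (Real.sinh (y/2) / (y/2)) ^ 2)
      (nhdsWithin 0 {(0:ℝ)}ᶜ) (nhds (1/2)) := by
    have h := ((aux_sinh_div.comp aux_half).pow 2).const_mul ((1/2) : ℝ)
    simpa using h
  refine h1.congr' ?_
  filter_upwards [self_mem_nhdsWithin] with y hy
  have hy' : y ≠ 0 := hy
  have hcosh : Real.cosh y = 1 + 2 * Real.sinh (y/2) ^ 2 := by
    have h1 := Real.cosh_two_mul (y/2)
    have h2 := Real.cosh_sq (y/2)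
    rw [show 2 * (y/2) = y by ring] at h1
    linarith
  rw [hcosh]
  field_simp
  ring

lemma aux_sqrt_mul {c : ℝ} (t : ℝ) (hc : 0 < c) (ht : t ≠ 0) :
    Tendsto (fun m : ℝ => Real.sqrt (c / m) * t) atTop (nhdsWithin 0 {(0:ℝ)}ᶜ) := by
  rw [tendsto_nhdsWithin_iff]
  constructor
  · have h1 : Tendsto (fun m : ℝ => c / m) atTop (nhds 0) :=
      tendsto_const_nhds.div_atTop tendsto_id
    have h2 := (Real.continuous_sqrt.tendsto 0).comp h1
    rw [Real.sqrt_zero] at h2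
    simpa using h2.mul_const t
  · filter_upwards [eventually_gt_atTop (0:ℝ)] with m hm
    simp only [Set.mem_compl_iff, Set.mem_singleton_iff]
    exact mul_ne_zero (ne_of_gt (Real.sqrt_pos.mpr (div_pos hc hm))) ht

lemma aux_sinh_le {x : ℝ} (hx : 0 ≤ x) : Real.sinh x ≤ x * Real.exp x := by
  rw [Real.sinh_eq]
  have h1 : 1 - Real.exp (-(2*x)) ≤ 2*x := by nlinarith [Real.add_one_le_exp (-(2*x))]
  have h2 : Real.exp (-x) = Real.exp x * Real.exp (-(2*x)) := by
    rw [← Real.exp_add]; ring_nf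
  nlinarith [Real.exp_pos x, mul_le_mul_of_nonneg_left h1 (Real.exp_pos x).le]

lemma aux_log_err {u : ℝ} (hu : |u| ≤ 1/2) : |Real.log (1 + u) - u| ≤ 2 * u ^ 2 := by
  have hx : |(-u)| < 1 := by rw [abs_neg]; linarith
  have h := Real.abs_log_sub_add_sum_range_le hx 1
  simp only [Finset.sum_range_one, pow_one, Nat.cast_zero, zero_add, div_one, sub_neg_eq_add,
    abs_neg] at h
  have h2 : |u| ^ 2 / (1 - |u|) ≤ 2 * u ^ 2 := by
    rw [sq_abs, div_le_iff₀ (by linarith [abs_nonneg u] : (0:ℝ) < 1 - |u|)]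
    nlinarith [sq_nonneg u, abs_nonneg u]
  have h3 : |Real.log (1 + u) - u| = |(-u) + Real.log (1 + u)| := by
    rw [show (-u) + Real.log (1+u) = Real.log (1+u) - u by ring]
  rw [h3]
  exact le_trans h h2

/-- Limit A : `m * (cdel (ρ/m) t - 1) → -(ρ/2) t²`. -/
lemma aux_limA (ρ t : ℝ) (ht : t ≠ 0) :
    Tendsto (fun m : ℝ => m * (cdel (ρ/m) t - 1)) atTop (nhds (-(ρ/2) * t^2)) := by
  rcases lt_trichotomy ρ 0 with hρ | rfl | hρ
  · -- ρ < 0 : cosh branch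
    have hmap := aux_sqrt_mul t (show (0:ℝ) < -ρ by linarith) ht
    have hcomp := aux_cosh.comp (by simpa using hmap : Tendsto
      (fun m : ℝ => Real.sqrt (-ρ / m) * t) atTop (nhdsWithin 0 {(0:ℝ)}ᶜ))
    have h2 := hcomp.const_mul ((-ρ) * t^2)
    have h3 : (-ρ) * t^2 * (1/2) = -(ρ/2) * t^2 := by ring
    rw [h3] at h2
    refine h2.congr' ?_
    filter_upwards [eventually_gt_atTop (0:ℝ)] with m hm
    have hδ : ρ / m < 0 := div_neg_of_neg_of_pos hρ hm
    have hnn : (0:ℝ) ≤ -(ρ/m) := by linarith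
    rw [cdel, if_neg (not_lt.mpr hδ.le), if_neg hδ.ne]
    have hx2 : Real.sqrt (-(ρ/m)) ^ 2 = -(ρ/m) := Real.sq_sqrt hnn
    have heq : -(ρ/m) = -ρ/m := by ring
    rw [Function.comp_apply]
    rw [show Real.sqrt (-ρ/m) = Real.sqrt (-(ρ/m)) by rw [heq]]
    have hmul : (Real.sqrt (-(ρ/m)) * t)^2 = (-(ρ/m)) * t^2 := by
      rw [mul_pow, hx2]
    rw [hmul]
    have hm0 : m ≠ 0 := hm.ne'
    set A := Real.cosh (Real.sqrt (-(ρ/m)) * t) - 1 with hA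
    field_simp [hρ.ne]
  · -- ρ = 0
    have : ∀ m : ℝ, m * (cdel ((0:ℝ)/m) t - 1) = 0 := by
      intro m
      rw [zero_div, cdel, if_neg (lt_irrefl 0), if_pos rfl]
      ring
    rw [show -(((0:ℝ))/2) * t^2 = 0 by ring]
    exact Filter.Tendsto.congr (fun m => (this m).symm) tendsto_const_nhds
  · -- ρ > 0 : cos branch
    have hmap := aux_sqrt_mul t hρ ht
    have hcomp := aux_cos.comp hmap
    have h2 := hcomp.const_mul (ρ * t^2)
    have h3 : ρ * t^2 * (-(1/2)) = -(ρ/2) * t^2 := by ring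
    rw [h3] at h2
    refine h2.congr' ?_
    filter_upwards [eventually_gt_atTop (0:ℝ)] with m hm
    have hδ : 0 < ρ / m := div_pos hρ hm
    rw [cdel, if_pos hδ]
    have hx2 : Real.sqrt (ρ/m) ^ 2 = ρ/m := Real.sq_sqrt hδ.le
    rw [Function.comp_apply]
    have hmul : (Real.sqrt (ρ/m) * t)^2 = (ρ/m) * t^2 := by rw [mul_pow, hx2]
    rw [hmul]
    have hm0 : m ≠ 0 := hm.ne'
    field_simp

/-- Limit B : `sdel (ρ/m) t → t`. -/
lemma aux_limB (ρ t : ℝ) (ht : t ≠ 0) :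
    Tendsto (fun m : ℝ => sdel (ρ/m) t) atTop (nhds t) := by
  rcases lt_trichotomy ρ 0 with hρ | rfl | hρ
  · have hmap := aux_sqrt_mul t (show (0:ℝ) < -ρ by linarith) ht
    have hcomp := aux_sinh_div.comp hmap
    have h2 := hcomp.mul_const t
    rw [one_mul] at h2
    refine h2.congr' ?_
    filter_upwards [eventually_gt_atTop (0:ℝ)] with m hm
    have hδ : ρ / m < 0 := div_neg_of_neg_of_pos hρ hm
    rw [sdel, if_neg (not_lt.mpr hδ.le), if_neg hδ.ne]
    rw [Function.comp_apply]
    have heq : -(ρ/m) = -ρ/m := by ring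
    rw [show Real.sqrt (-(ρ/m)) = Real.sqrt (-ρ/m) by rw [heq]]
    have hx0 : Real.sqrt (-ρ/m) ≠ 0 :=
      ne_of_gt (Real.sqrt_pos.mpr (div_pos (by linarith) hm))
    set x := Real.sqrt (-ρ/m) with hx
    field_simp
  · refine Filter.Tendsto.congr (fun m => ?_) tendsto_const_nhds
    rw [zero_div, sdel, if_neg (lt_irrefl 0), if_pos rfl]
  · have hmap := aux_sqrt_mul t hρ ht
    have hcomp := aux_sin_div.comp hmap
    have h2 := hcomp.mul_const t
    rw [one_mul] at h2
    refine h2.congr' ?_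
    filter_upwards [eventually_gt_atTop (0:ℝ)] with m hm
    have hδ : 0 < ρ / m := div_pos hρ hm
    rw [sdel, if_pos hδ]
    rw [Function.comp_apply]
    have hx0 : Real.sqrt (ρ/m) ≠ 0 := ne_of_gt (Real.sqrt_pos.mpr hδ)
    set x := Real.sqrt (ρ/m) with hx
    field_simp

/-- Uniform eventual positivity on `|s| ≤ |t|`. -/
lemma aux_pos (H ρ t : ℝ) : ∀ᶠ m in atTop, ∀ s : ℝ, |s| ≤ |t| →
    (1:ℝ)/2 ≤ cdel (ρ/m) s + (H/m) * sdel (ρ/m) s := by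
  rcases lt_trichotomy ρ 0 with hρ | rfl | hρ
  · -- ρ < 0
    filter_upwards [eventually_ge_atTop (6 * |H| * |t| + 1), eventually_ge_atTop (-ρ*t^2)]
      with m hm1 hm2
    intro s hs
    have hm0 : (0:ℝ) < m := lt_of_lt_of_le (by positivity) hm1
    have hδ : ρ / m < 0 := div_neg_of_neg_of_pos hρ hm0
    rw [cdel, sdel, if_neg (not_lt.mpr hδ.le), if_neg hδ.ne, if_neg (not_lt.mpr hδ.le),
      if_neg hδ.ne]
    set x := Real.sqrt (-(ρ/m)) with hxdef
    have hnn : (0:ℝ) ≤ -(ρ/m) := by linarith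
    have hx2 : x ^ 2 = -(ρ/m) := Real.sq_sqrt hnn
    have hxpos : 0 < x := Real.sqrt_pos.mpr (by
      have : 0 < -(ρ/m) := by linarith
      exact this)
    have hxt : x * |t| ≤ 1 := by
      have hsq : (x * |t|) ^ 2 ≤ 1 := by
        have h1 : (x * |t|)^2 = (-(ρ/m)) * t^2 := by
          rw [mul_pow, hx2, sq_abs]
        rw [h1]
        have : (-ρ) * t^2 ≤ m := hm2.trans_eq' (by ring)
        rw [show (-(ρ/m)) * t^2 = ((-ρ) * t^2) / m by ring]
        rw [div_le_one hm0]
        exact this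
      nlinarith [mul_nonneg hxpos.le (abs_nonneg t)]
    have hsinh : |Real.sinh (x * s) / x| ≤ 3 * |t| := by
      rw [abs_div, abs_of_pos hxpos, div_le_iff₀ hxpos]
      have h1 : |Real.sinh (x*s)| = Real.sinh |x*s| := Real.abs_sinh _
      have h2 : |x*s| ≤ x * |t| := by
        rw [abs_mul, abs_of_pos hxpos]
        exact mul_le_mul_of_nonneg_left hs hxpos.le
      have h3 : Real.sinh |x*s| ≤ Real.sinh (x*|t|) := Real.sinh_le_sinh.mpr h2
      have h4 : Real.sinh (x*|t|) ≤ (x*|t|) * Real.exp (x*|t|) :=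
        aux_sinh_le (mul_nonneg hxpos.le (abs_nonneg t))
      have h5 : Real.exp (x*|t|) ≤ 3 := by
        calc Real.exp (x*|t|) ≤ Real.exp 1 := Real.exp_le_exp.mpr hxt
        _ ≤ 3 := by
          have := Real.exp_one_lt_d9
          linarith
      have h6 : (x*|t|) * Real.exp (x*|t|) ≤ (x*|t|) * 3 :=
        mul_le_mul_of_nonneg_left h5 (mul_nonneg hxpos.le (abs_nonneg t))
      calc |Real.sinh (x*s)| ≤ (x*|t|) * 3 := by rw [h1]; linarith
        _ = 3 * |t| * x := by ring
    have hcosh : 1 ≤ Real.cosh (x * s) := Real.one_le_cosh _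
    have hterm : |H/m * (Real.sinh (x*s)/x)| ≤ 3 * |H| * |t|/m := by
      rw [abs_mul, abs_div, abs_of_pos hm0]
      calc |H|/m * |Real.sinh (x*s)/x| ≤ |H|/m * (3*|t|) := by
            apply mul_le_mul_of_nonneg_left hsinh
            positivity
        _ = 3 * |H| * |t|/m := by ring
    have hsmall : 3 * |H| * |t|/m ≤ 1/2 := by
      rw [div_le_iff₀ hm0]
      nlinarith [abs_nonneg H, abs_nonneg t]
    have := neg_abs_le (H/m * (Real.sinh (x*s)/x))
    linarith
  · -- ρ = 0
    filter_upwards [eventually_ge_atTop (2 * |H| * |t| + 1)] with m hm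
    intro s hs
    have hm0 : (0:ℝ) < m := lt_of_lt_of_le (by positivity) hm
    rw [zero_div, cdel, sdel, if_neg (lt_irrefl 0), if_pos rfl, if_neg (lt_irrefl 0), if_pos rfl]
    have hterm : |H/m * s| ≤ |H| * |t|/m := by
      rw [abs_mul, abs_div, abs_of_pos hm0]
      calc |H|/m * |s| ≤ |H|/m * |t| := by
            apply mul_le_mul_of_nonneg_left hs
            positivity
        _ = |H| * |t|/m := by ring
    have hsmall : |H| * |t|/m ≤ 1/2 := by
      rw [div_le_iff₀ hm0]
      nlinarith [abs_nonneg H, abs_nonneg t]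
    have := neg_abs_le (H/m * s)
    linarith
  · -- ρ > 0
    filter_upwards [eventually_ge_atTop (2*(ρ*t^2/2 + |H| * |t|) + 1)] with m hm
    intro s hs
    have hm0 : (0:ℝ) < m := lt_of_lt_of_le (by positivity) hm
    have hδ : 0 < ρ / m := div_pos hρ hm0
    rw [cdel, sdel, if_pos hδ, if_pos hδ]
    set x := Real.sqrt (ρ/m) with hxdef
    have hx2 : x ^ 2 = ρ/m := Real.sq_sqrt hδ.le
    have hxpos : 0 < x := Real.sqrt_pos.mpr hδ
    have hs2 : s^2 ≤ t^2 := by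
      nlinarith [sq_abs s, sq_abs t, mul_self_le_mul_self (abs_nonneg s) hs]
    have hcos : 1 - (ρ*t^2/2)/m ≤ Real.cos (x*s) := by
      have h1 := Real.one_sub_sq_div_two_le_cos (x := x*s)
      have h2 : (x*s)^2 = (ρ/m) * s^2 := by rw [mul_pow, hx2]
      have h3 : (ρ/m) * s^2 ≤ (ρ/m) * t^2 := mul_le_mul_of_nonneg_left hs2 hδ.le
      have h4 : (ρ/m) * t^2 = (ρ*t^2)/m := by ring
      have h5 : (x*s)^2 ≤ (ρ*t^2)/m := by rw [h2]; linarith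
      have h6 : (ρ*t^2)/m / 2 = (ρ*t^2/2)/m := by ring
      linarith
    have hsin : |Real.sin (x*s)/x| ≤ |t| := by
      rw [abs_div, abs_of_pos hxpos, div_le_iff₀ hxpos]
      calc |Real.sin (x*s)| ≤ |x*s| := Real.abs_sin_le_abs
        _ = x * |s| := by rw [abs_mul, abs_of_pos hxpos]
        _ ≤ x * |t| := mul_le_mul_of_nonneg_left hs hxpos.le
        _ = |t| * x := by ring
    have hterm : |H/m * (Real.sin (x*s)/x)| ≤ |H| * |t|/m := by
      rw [abs_mul, abs_div, abs_of_pos hm0]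
      calc |H|/m * |Real.sin (x*s)/x| ≤ |H|/m * |t| := by
            apply mul_le_mul_of_nonneg_left hsin
            positivity
        _ = |H| * |t|/m := by ring
    have hsmall : (ρ*t^2/2)/m + |H| * |t|/m ≤ 1/2 := by
      rw [← add_div, div_le_iff₀ hm0]
      nlinarith [abs_nonneg H, abs_nonneg t, sq_nonneg t, mul_pos hρ hm0]
    have := neg_abs_le (H/m * (Real.sin (x*s)/x))
    linarith

/-- pointwise limit of `J_{H,ρ,m}` as `m → ∞` is `exp(Ht − (ρ/2)t²)`. -/
theorem stmt1 (H ρ t : ℝ) :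
    Filter.Tendsto (fun m : ℝ => Jfun H ρ m t) Filter.atTop
      (nhds (Real.exp (H * t - ρ / 2 * t ^ 2))) := by
  rcases eq_or_ne t 0 with rfl | ht
  · -- t = 0
    have hval : ∀ m : ℝ, Jfun H ρ m 0 = 1 := by
      intro m
      have h1 : truncPos (fun s => cdel (ρ/m) s + (H/m) * sdel (ρ/m) s) 0 = 1 := by
        rw [truncPos, if_neg]
        · have hc : cdel (ρ/m) 0 = 1 := by rw [cdel]; split_ifs <;> simp
          have hs : sdel (ρ/m) 0 = 0 := by rw [sdel]; split_ifs <;> simp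
          simp only [hc, hs]
          ring
        · rintro ⟨s, hs, -⟩
          simp at hs
      rw [Jfun, h1, Real.one_rpow]
    rw [show H*0 - ρ/2*0^2 = 0 by ring, Real.exp_zero]
    exact Filter.Tendsto.congr (fun m => (hval m).symm) tendsto_const_nhds
  · -- t ≠ 0
    have hU : Tendsto (fun m : ℝ =>
        m * ((cdel (ρ/m) t + (H/m) * sdel (ρ/m) t) - 1)) atTop
        (nhds (H*t - ρ/2*t^2)) := by
      have h := (aux_limA ρ t ht).add ((aux_limB ρ t ht).const_mul H)
      rw [show -(ρ/2) * t^2 + H * t = H*t - ρ/2*t^2 by ring] at h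
      refine h.congr' ?_
      filter_upwards [eventually_gt_atTop (0:ℝ)] with m hm
      have hm0 : m ≠ 0 := hm.ne'
      field_simp
      ring
    have hu0 : Tendsto (fun m : ℝ =>
        (cdel (ρ/m) t + (H/m) * sdel (ρ/m) t) - 1) atTop (nhds 0) := by
      have h := hU.mul tendsto_inv_atTop_zero
      rw [mul_zero] at h
      refine h.congr' ?_
      filter_upwards [eventually_gt_atTop (0:ℝ)] with m hm
      have hm0 : m ≠ 0 := hm.ne'
      field_simp
    have hpos := aux_pos H ρ t
    -- J = exp (m * log g) eventually
    have hJ : ∀ᶠ m in atTop, Jfun H ρ m t =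
        Real.exp (m * Real.log (cdel (ρ/m) t + (H/m) * sdel (ρ/m) t)) := by
      filter_upwards [hpos] with m hp
      have hgt : (1:ℝ)/2 ≤ cdel (ρ/m) t + (H/m) * sdel (ρ/m) t := hp t le_rfl
      have hgpos : 0 < cdel (ρ/m) t + (H/m) * sdel (ρ/m) t := by linarith
      have htr : truncPos (fun s => cdel (ρ/m) s + (H/m) * sdel (ρ/m) s) t =
          cdel (ρ/m) t + (H/m) * sdel (ρ/m) t := by
        rw [truncPos, if_neg]
        rintro ⟨s, hsmem, h0⟩
        have hsabs : |s| ≤ |t| := by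
          rcases hsmem with ⟨h1, h2⟩
          have hmin : -|t| ≤ min t 0 := le_min (neg_abs_le t) (by simp [abs_nonneg])
          have hmax : max t 0 ≤ |t| := max_le (le_abs_self t) (abs_nonneg t)
          rw [abs_le]
          constructor <;> [linarith; linarith]
        have := hp s hsabs
        rw [h0] at this
        linarith
      rw [Jfun, htr, Real.rpow_def_of_pos hgpos, mul_comm]
    -- m * log g → L
    have hlog : Tendsto (fun m : ℝ =>
        m * Real.log (cdel (ρ/m) t + (H/m) * sdel (ρ/m) t)) atTop
        (nhds (H*t - ρ/2*t^2)) := by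
      set u : ℝ → ℝ := fun m => (cdel (ρ/m) t + (H/m) * sdel (ρ/m) t) - 1 with hu
      have herr : Tendsto (fun m : ℝ =>
          m * Real.log (cdel (ρ/m) t + (H/m) * sdel (ρ/m) t) - m * u m) atTop (nhds 0) := by
        apply squeeze_zero_norm' (a := fun m => 2 * |m * u m| * |u m|)
        · filter_upwards [hu0.eventually (eventually_le_nhds (show (0:ℝ) < 1/2 by norm_num)),
            hu0.eventually (eventually_ge_nhds (show (-(1/2) : ℝ) < 0 by norm_num)),
            eventually_ge_atTop (0:ℝ)] with m hle hge hm0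
          have habs : |u m| ≤ 1/2 := abs_le.mpr ⟨hge, hle⟩
          have hkey := aux_log_err habs
          have h1 : (1:ℝ) + u m = cdel (ρ/m) t + (H/m) * sdel (ρ/m) t := by
            simp only [hu]; ring
          rw [h1] at hkey
          have h2 : m * Real.log (cdel (ρ/m) t + (H/m) * sdel (ρ/m) t) - m * u m =
              m * (Real.log (cdel (ρ/m) t + (H/m) * sdel (ρ/m) t) - u m) := by ring
          have h3 : |u m| * |u m| = (u m)^2 := by rw [← abs_mul, abs_mul_self, sq]
          rw [Real.norm_eq_abs, h2, abs_mul, abs_of_nonneg hm0]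
          calc m * |Real.log (cdel (ρ/m) t + (H/m) * sdel (ρ/m) t) - u m|
              ≤ m * (2 * (u m)^2) := mul_le_mul_of_nonneg_left hkey hm0
            _ = 2 * |m * u m| * |u m| := by
                rw [abs_mul, abs_of_nonneg hm0, ← h3]; ring
        · have hg := ((hU.abs).mul (hu0.abs)).const_mul (2:ℝ)
          simp only [abs_zero, mul_zero] at hg
          refine hg.congr fun m => by ring
      have hsum := herr.add hU
      rw [zero_add] at hsum
      refine hsum.congr fun m => by ring
    have hfin := (Real.continuous_exp.tendsto _).comp hlog
    exact hfin.congr' (hJ.mono fun m h => h.symm)
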